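/- There is no clustering function that simultaneously satisfies (ε, δ)-additive perturbation robustness for any δ ≤ 2/3 and ε > 0, replication invariance, and the three-body rule. -/
import Mathlib


open Finset

def IsDissim {X : Type*} (d : X → X → ℝ) : Prop :=
  (∀ x y, d x y = d y x) ∧ (∀ x, d x x = 0) ∧ (∀ x y, 0 ≤ d x y)

open Classical in
noncomputable def clDist {X : Type*} [Fintype X] {k l : ℕ}
    (c : X → Fin k) (c' : X → Fin l) : ℝ :=
  ((Finset.univ.filter fun p : X × X =>
      p.1 ≠ p.2 ∧ ¬((c p.1 = c p.2) ↔ (c' p.1 = c' p.2))).card : ℝ) /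
    ((Fintype.card X : ℝ) * ((Fintype.card X : ℝ) - 1))

structure ClusteringFunction where
  F : ∀ (X : Type) [Fintype X] [DecidableEq X], (X → X → ℝ) → (k : ℕ) → X → Fin k

/-- `(ε, δ)`-additive perturbation robustness. -/
def AddRobust (𝓕 : ClusteringFunction) (ε δ : ℝ) : Prop :=
  ∀ (X : Type) [Fintype X] [DecidableEq X] (d d' : X → X → ℝ),
    IsDissim d → IsDissim d' →
    (∀ x y, d x y - ε ≤ d' x y ∧ d' x y ≤ d x y + ε) →
    ∀ k : ℕ, clDist (𝓕.F X d k) (𝓕.F X d' k) < δ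

/-- Replicating every point `r` times leaves the clustering of the originals unchanged,
and every replica is placed in the cluster of its original point. -/
def ReplicationInvariant (𝓕 : ClusteringFunction) : Prop :=
  ∀ (X : Type) [Fintype X] [DecidableEq X] (d : X → X → ℝ), IsDissim d →
    ∀ (r : ℕ), 0 < r → ∀ (k : ℕ) (x y : X) (i j : Fin r),
      (𝓕.F (X × Fin r) (fun p q => d p.1 q.1) k (x, i) =
        𝓕.F (X × Fin r) (fun p q => d p.1 q.1) k (y, j) ↔
        𝓕.F X d k x = 𝓕.F X d k y)

/-- Given exactly three points, asked for two clusters, the two closest points are grouped. -/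
def ThreeBody (𝓕 : ClusteringFunction) : Prop :=
  ∀ (X : Type) [Fintype X] [DecidableEq X] (d : X → X → ℝ), IsDissim d →
    ∀ a b c : X, a ≠ b → a ≠ c → b ≠ c →
      (Finset.univ : Finset X) = {a, b, c} →
      d b c < d a b → d b c < d a c →
      (𝓕.F X d 2 b = 𝓕.F X d 2 c ∧ 𝓕.F X d 2 a ≠ 𝓕.F X d 2 b)

noncomputable def dOne (ε : ℝ) : Fin 3 → Fin 3 → ℝ := fun x y =>
  if x = y then 0 else if x ≠ 0 ∧ y ≠ 0 then ε / 4 else ε / 2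

noncomputable def dTwo (ε : ℝ) : Fin 3 → Fin 3 → ℝ := fun x y =>
  if x = y then 0 else if x ≠ 2 ∧ y ≠ 2 then ε / 4 else ε / 2

theorem no_additive_perturbation_robust_clustering_function
    (ε δ : ℝ) (hε : 0 < ε) (hδ : δ ≤ 2 / 3) :
    ¬ ∃ 𝓕 : ClusteringFunction,
        AddRobust 𝓕 ε δ ∧ ReplicationInvariant 𝓕 ∧ ThreeBody 𝓕 := by
  rintro ⟨𝓕, hRob, -, hTB⟩
  have h1 : IsDissim (dOne ε) := by
    refine ⟨?_, ?_, ?_⟩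
    · intro x y; fin_cases x <;> fin_cases y <;> simp [dOne]
    · intro x; simp [dOne]
    · intro x y; fin_cases x <;> fin_cases y <;> simp [dOne] <;> linarith
  have h2 : IsDissim (dTwo ε) := by
    refine ⟨?_, ?_, ?_⟩
    · intro x y; fin_cases x <;> fin_cases y <;> simp [dTwo]
    · intro x; simp [dTwo]
    · intro x y; fin_cases x <;> fin_cases y <;> simp [dTwo] <;> linarith
  have hpert : ∀ x y, dOne ε x y - ε ≤ dTwo ε x y ∧ dTwo ε x y ≤ dOne ε x y + ε := by
    intro x y; fin_cases x <;> fin_cases y <;>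
      simp [dOne, dTwo] <;> first | (constructor <;> linarith) | linarith
  set F := 𝓕.F (Fin 3) (dOne ε) 2 with hFdef
  set G := 𝓕.F (Fin 3) (dTwo ε) 2 with hGdef
  obtain ⟨hF1, hF2⟩ := hTB (Fin 3) (dOne ε) h1 0 1 2 (by decide) (by decide) (by decide)
    (by decide) (by simp [dOne]; linarith) (by simp [dOne]; linarith)
  obtain ⟨hG1, hG2⟩ := hTB (Fin 3) (dTwo ε) h2 2 0 1 (by decide) (by decide) (by decide)
    (by decide) (by simp [dTwo]; linarith) (by simp [dTwo]; linarith)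
  -- hF1 : F 1 = F 2, hF2 : F 0 ≠ F 1, hG1 : G 0 = G 1, hG2 : G 2 ≠ G 0
  have hF02 : F 0 ≠ F 2 := fun h => hF2 (h.trans hF1.symm)
  have hG12 : G 1 ≠ G 2 := fun h => hG2 ((hG1.trans h).symm)
  have hG02 : G 0 ≠ G 2 := fun h => hG2 h.symm
  have hrob := hRob (Fin 3) (dOne ε) (dTwo ε) h1 h2 hpert 2
  have hcard : ∀ inst : DecidablePred fun p : Fin 3 × Fin 3 =>
      p.1 ≠ p.2 ∧ ¬((F p.1 = F p.2) ↔ (G p.1 = G p.2)),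
      (@Finset.filter _ _ inst Finset.univ).card = 4 := by
    intro inst
    have hset : @Finset.filter _ _ inst Finset.univ =
        {((0 : Fin 3), (1 : Fin 3)), (1, 0), (1, 2), (2, 1)} := by
      ext ⟨x, y⟩
      fin_cases x <;> fin_cases y <;>
        simp [Finset.mem_filter, Prod.ext_iff] <;> tauto
    rw [hset]
    decide
  have h23 : clDist F G = 2 / 3 := by
    simp only [clDist]
    rw [hcard]
    simp [Fintype.card_fin]
    norm_num
  rw [h23] at hrob
  linarith
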